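/- arXiv:2305.11110 — 4 statements merged into one kernel-verified Lean document; each statement's English description precedes it below -/
import Mathlib

section
/- Let V_n = (25n² − 50n + 26)/(24(n−1)²) for n ≥ 3 (the nth constrained quantization error for the uniform distribution on {(x,0) : 0 ≤ x ≤ 2} with constraint the segment of y = 1 between (1/2,1) and (3/2,1)). Then V_n converges to V_∞ = 25/24 as n → ∞, the constrained quantization dimension lim_{n→∞} 2·log n / (−log(V_n − V_∞)) equals 1, and the 1-dimensional constrained quantization coefficient lim_{n→∞} n²·(V_n − V_∞) equals 1/24. -/
open Filter Real

/-- For `Vₙ = (25n² - 50n + 26)/(24(n-1)²)` (the `n`th constrained quantization error for the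
uniform distribution on `{(x,0) : 0 ≤ x ≤ 2}` with constraint the segment of `y = 1` between
`(1/2, 1)` and `(3/2, 1)`): `Vₙ → V_∞ = 25/24`, the constrained quantization dimension
`lim 2 log n / (-log(Vₙ - V_∞))` equals `1`, and the `1`-dimensional constrained quantization
coefficient `lim n² (Vₙ - V_∞)` equals `1/24`. -/
theorem constrained_dimension_coefficient_segment_middle :
    ∀ V : ℕ → ℝ,
      (V = fun n : ℕ => (25 * (n : ℝ) ^ 2 - 50 * (n : ℝ) + 26) / (24 * ((n : ℝ) - 1) ^ 2)) →
      Tendsto V atTop (nhds (25 / 24)) ∧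
      Tendsto (fun n : ℕ => 2 * Real.log n / (-Real.log (V n - 25 / 24)))
        atTop (nhds 1) ∧
      Tendsto (fun n : ℕ => (n : ℝ) ^ 2 * (V n - 25 / 24)) atTop (nhds (1 / 24)) := by
  intro V hV
  -- basic limits
  have hnat : Tendsto (fun n : ℕ => (n : ℝ)) atTop atTop := tendsto_natCast_atTop_atTop
  have hn1 : Tendsto (fun n : ℕ => (n : ℝ) - 1) atTop atTop := by
    simpa [sub_eq_add_neg] using tendsto_atTop_add_const_right atTop (-1 : ℝ) hnat
  -- key identity
  have hkey : ∀ n : ℕ, 2 ≤ n → V n - 25 / 24 = 1 / (24 * ((n : ℝ) - 1) ^ 2) := by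
    intro n hn
    have hne : ((n : ℝ) - 1) ≠ 0 := by
      have : (2 : ℝ) ≤ (n : ℝ) := by exact_mod_cast hn
      nlinarith
    rw [hV]
    field_simp
    ring
  have hsq : Tendsto (fun n : ℕ => 24 * ((n : ℝ) - 1) ^ 2) atTop atTop := by
    have h2 : Tendsto (fun n : ℕ => ((n : ℝ) - 1) * ((n : ℝ) - 1)) atTop atTop :=
      hn1.atTop_mul_atTop₀ hn1
    have h3 : Tendsto (fun n : ℕ => ((n : ℝ) - 1) ^ 2) atTop atTop := by
      simpa [pow_two] using h2
    exact (tendsto_const_mul_atTop_of_pos (by norm_num : (0:ℝ) < 24)).mpr h3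
  have h0 : Tendsto (fun n : ℕ => 1 / (24 * ((n : ℝ) - 1) ^ 2)) atTop (nhds 0) := by
    simpa only [one_div, Function.comp_def] using tendsto_inv_atTop_zero.comp hsq
  -- first limit
  have goal1 : Tendsto V atTop (nhds (25 / 24)) := by
    have : Tendsto (fun n : ℕ => 25 / 24 + 1 / (24 * ((n : ℝ) - 1) ^ 2)) atTop
        (nhds (25 / 24)) := by
      simpa using tendsto_const_nhds.add h0
    refine this.congr' ?_
    filter_upwards [eventually_ge_atTop 2] with n hn
    have := hkey n hn
    linarith
  refine ⟨goal1, ?_, ?_⟩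
  -- second limit
  · have hlogn : Tendsto (fun n : ℕ => Real.log n) atTop atTop :=
      Real.tendsto_log_atTop.comp hnat
    have hlogn' : Tendsto (fun n : ℕ => (Real.log n)⁻¹) atTop (nhds 0) :=
      tendsto_inv_atTop_zero.comp hlogn
    -- log (n-1) / log n → 1
    have hinvn : Tendsto (fun n : ℕ => 1 - 1 / (n : ℝ)) atTop (nhds 1) := by
      have : Tendsto (fun n : ℕ => 1 / (n : ℝ)) atTop (nhds 0) := by
        simpa only [one_div, Function.comp_def] using tendsto_inv_atTop_zero.comp hnat
      simpa using tendsto_const_nhds.sub this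
    have hlogfrac : Tendsto (fun n : ℕ => Real.log (1 - 1 / (n : ℝ))) atTop (nhds 0) := by
      have hc : ContinuousAt Real.log 1 := Real.continuousAt_log (by norm_num)
      have := hc.tendsto.comp hinvn
      simpa [Function.comp_def] using this
    have hratio : Tendsto (fun n : ℕ => Real.log ((n : ℝ) - 1) / Real.log n)
        atTop (nhds 1) := by
      have hprod : Tendsto (fun n : ℕ => 1 + Real.log (1 - 1 / (n : ℝ)) * (Real.log n)⁻¹)
          atTop (nhds 1) := by
        have := hlogfrac.mul hlogn'
        simpa using tendsto_const_nhds.add this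
      refine hprod.congr' ?_
      filter_upwards [eventually_ge_atTop 2] with n hn
      have hn2 : (2 : ℝ) ≤ (n : ℝ) := by exact_mod_cast hn
      have hnpos : (0 : ℝ) < (n : ℝ) := by linarith
      have hfrac : (1 : ℝ) - 1 / (n : ℝ) ≠ 0 := by
        have : 1 / (n : ℝ) ≤ 1 / 2 := by
          apply div_le_div_of_nonneg_left <;> linarith
        linarith
      have hlogpos : 0 < Real.log n := Real.log_pos (by linarith)
      have heq : ((n : ℝ) - 1) = (n : ℝ) * (1 - 1 / (n : ℝ)) := by
        field_simp
      rw [heq, Real.log_mul (ne_of_gt hnpos) hfrac]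
      field_simp
    -- denominator tends to 1
    have hden : Tendsto
        (fun n : ℕ => Real.log 24 / (2 * Real.log n) + Real.log ((n : ℝ) - 1) / Real.log n)
        atTop (nhds 1) := by
      have h1 : Tendsto (fun n : ℕ => Real.log 24 / (2 * Real.log n)) atTop (nhds 0) := by
        have h2 : Tendsto (fun n : ℕ => 2 * Real.log n) atTop atTop :=
          (tendsto_const_mul_atTop_of_pos (by norm_num : (0:ℝ) < 2)).mpr hlogn
        have := tendsto_inv_atTop_zero.comp h2
        simpa [div_eq_mul_inv] using tendsto_const_nhds.mul this
      simpa using h1.add hratio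
    have : Tendsto (fun n : ℕ =>
        (Real.log 24 / (2 * Real.log n) + Real.log ((n : ℝ) - 1) / Real.log n)⁻¹)
        atTop (nhds 1) := by
      simpa using hden.inv₀ one_ne_zero
    refine this.congr' ?_
    filter_upwards [eventually_ge_atTop 3] with n hn
    have hn3 : (3 : ℝ) ≤ (n : ℝ) := by exact_mod_cast hn
    have hne : ((n : ℝ) - 1) ≠ 0 := by nlinarith
    have hlogpos : 0 < Real.log n := Real.log_pos (by linarith)
    have hkey' := hkey n (by omega)
    have hlogeq : -Real.log (V n - 25 / 24) = Real.log 24 + 2 * Real.log ((n : ℝ) - 1) := by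
      rw [hkey', one_div, Real.log_inv, neg_neg,
        Real.log_mul (by norm_num) (pow_ne_zero 2 hne), Real.log_pow]
      push_cast
      ring
    rw [hlogeq]
    have hcomb : Real.log 24 / (2 * Real.log n) + Real.log ((n : ℝ) - 1) / Real.log n
        = (Real.log 24 + 2 * Real.log ((n : ℝ) - 1)) / (2 * Real.log n) := by
      field_simp
    rw [hcomb, inv_div]
  -- third limit
  · have hinv1 : Tendsto (fun n : ℕ => 1 / ((n : ℝ) - 1)) atTop (nhds 0) := by
      simpa only [one_div, Function.comp_def] using tendsto_inv_atTop_zero.comp hn1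
    have hlim : Tendsto (fun n : ℕ => (1 + 1 / ((n : ℝ) - 1)) ^ 2 / 24) atTop
        (nhds (1 / 24)) := by
      have h1 : Tendsto (fun n : ℕ => (1 + 1 / ((n : ℝ) - 1)) ^ 2) atTop (nhds 1) := by
        have := ((tendsto_const_nhds (x := (1:ℝ)) (f := atTop) (α := ℕ)).add hinv1).pow 2
        simpa using this
      have := h1.div_const 24
      simpa using this
    refine hlim.congr' ?_
    filter_upwards [eventually_ge_atTop 2] with n hn
    have hn2 : (2 : ℝ) ≤ (n : ℝ) := by exact_mod_cast hn
    have hne : ((n : ℝ) - 1) ≠ 0 := by nlinarith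
    rw [hkey n hn]
    field_simp
    ring
end

section
/- Let a > 0 and let V_n = a² + 1 − (2an/π)·sin(π/n) for n ≥ 3 (the nth constrained quantization error for the uniform distribution on the unit circle with constraint the concentric circle of radius a). Then V_n converges to V_∞ = (a − 1)² as n → ∞, the constrained quantization dimension lim_{n→∞} 2·log n / (−log(V_n − V_∞)) equals 1, and the 1-dimensional constrained quantization coefficient lim_{n→∞} n²·(V_n − V_∞) equals π²a/3. -/
open Filter Real

/-- For `a > 0` and `Vₙ = a² + 1 - (2an/π) sin(π/n)` (the `n`th constrained quantization error
for the uniform distribution on the unit circle with constraint the concentric circle of radius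
`a`): `Vₙ → V_∞ = (a-1)²`, the constrained quantization dimension
`lim 2 log n / (-log(Vₙ - V_∞))` equals `1`, and the `1`-dimensional constrained quantization
coefficient `lim n² (Vₙ - V_∞)` equals `π² a / 3`. -/
theorem constrained_dimension_coefficient_circle (a : ℝ) (ha : 0 < a) :
    ∀ V : ℕ → ℝ,
      (V = fun n : ℕ => a ^ 2 + 1 - (2 * a * (n : ℝ) / π) * Real.sin (π / (n : ℝ))) →
      Tendsto V atTop (nhds ((a - 1) ^ 2)) ∧
      Tendsto (fun n : ℕ => 2 * Real.log n / (-Real.log (V n - (a - 1) ^ 2)))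
        atTop (nhds 1) ∧
      Tendsto (fun n : ℕ => (n : ℝ) ^ 2 * (V n - (a - 1) ^ 2)) atTop
        (nhds (π ^ 2 * a / 3)) := by
  intro V hV
  have hπ : (0:ℝ) < π := Real.pi_pos
  set c : ℝ := π ^ 2 * a / 3 with hc
  have hcpos : 0 < c := by positivity
  set f : ℕ → ℝ := fun n => (n : ℝ) ^ 2 * (V n - (a - 1) ^ 2) with hf
  -- main limit : f → c
  have hflim : Tendsto f atTop (nhds c) := by
    have hsub : Tendsto (fun n => f n - c) atTop (nhds 0) := by
      refine squeeze_zero_norm' ?_ (tendsto_const_div_atTop_nhds_zero_nat (10 * a * π ^ 3 / 96))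
      · filter_upwards [eventually_ge_atTop 4] with n hn
        have hn0 : (0:ℝ) < (n : ℝ) := by exact_mod_cast Nat.lt_of_lt_of_le (by norm_num) hn
        have hn0' : (n:ℝ) ≠ 0 := ne_of_gt hn0
        have hx1 : |π / (n:ℝ)| ≤ 1 := by
          rw [abs_of_pos (by positivity)]
          rw [div_le_one hn0]
          calc π ≤ 4 := Real.pi_le_four
            _ ≤ (n:ℝ) := by exact_mod_cast hn
        have hsinb := Real.sin_bound hx1
        have key : f n - c = -(2 * a * (n:ℝ)^3 / π) *
            (Real.sin (π / (n:ℝ)) - (π / (n:ℝ) - (π / (n:ℝ)) ^ 3 / 6)) := by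
          simp only [hf, hV, hc]
          field_simp
          ring
        rw [key]
        rw [Real.norm_eq_abs, abs_mul, abs_neg, abs_of_pos (by positivity)]
        calc 2 * a * (n:ℝ)^3 / π * |Real.sin (π / (n:ℝ)) - (π / (n:ℝ) - (π / (n:ℝ)) ^ 3 / 6)|
            ≤ 2 * a * (n:ℝ)^3 / π * (|π / (n:ℝ)| ^ 4 * (5 / 96)) := by
              refine mul_le_mul_of_nonneg_left (hsinb.trans ?_) (by positivity)
              have h4 : 0 ≤ |π / (n:ℝ)| ^ 4 := by positivity
              have h5 : |π / (n:ℝ)| ^ 5 = |π / (n:ℝ)| ^ 4 * |π / (n:ℝ)| := pow_succ _ _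
              rw [h5]; nlinarith [mul_le_mul_of_nonneg_left hx1 h4]
          _ = 10 * a * π ^ 3 / 96 / (n:ℝ) := by
              rw [abs_of_pos (by positivity)]
              field_simp
              ring
    have := hsub.add (tendsto_const_nhds (x := c))
    simpa using this
  have hn2inv : Tendsto (fun n : ℕ => ((n:ℝ) ^ 2)⁻¹) atTop (nhds 0) := by
    have h1 : Tendsto (fun n : ℕ => (1:ℝ) / n * (1 / n)) atTop (nhds (0 * 0)) :=
      tendsto_one_div_atTop_nhds_zero_nat.mul tendsto_one_div_atTop_nhds_zero_nat
    simp only [zero_mul] at h1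
    refine h1.congr fun n => by rw [div_mul_div_comm, one_mul, one_div, sq]
  refine ⟨?_, ?_, hflim⟩
  · -- V n → (a-1)^2
    have h : Tendsto (fun n : ℕ => (a - 1) ^ 2 + f n * ((n:ℝ) ^ 2)⁻¹) atTop
        (nhds ((a - 1) ^ 2 + c * 0)) :=
      tendsto_const_nhds.add (hflim.mul hn2inv)
    rw [mul_zero, add_zero] at h
    apply h.congr'
    filter_upwards [eventually_ge_atTop 1] with n hn
    have hn0 : ((n:ℝ) ^ 2) ≠ 0 := by
      have : (0:ℝ) < (n:ℝ) := by exact_mod_cast hn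
      positivity
    simp only [hf]
    field_simp
    ring
  · -- dimension limit
    have hlogf : Tendsto (fun n : ℕ => Real.log (f n)) atTop (nhds (Real.log c)) :=
      hflim.log (ne_of_gt hcpos)
    have hloginv : Tendsto (fun n : ℕ => (2 * Real.log n)⁻¹) atTop (nhds 0) := by
      apply Tendsto.inv_tendsto_atTop
      exact (tendsto_log_atTop.comp tendsto_natCast_atTop_atTop).const_mul_atTop (by norm_num)
    have hratio : Tendsto (fun n : ℕ => Real.log (f n) * (2 * Real.log n)⁻¹) atTop
        (nhds (Real.log c * 0)) := hlogf.mul hloginv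
    rw [mul_zero] at hratio
    have hmain : Tendsto (fun n : ℕ => (1 - Real.log (f n) * (2 * Real.log n)⁻¹)⁻¹) atTop
        (nhds 1) := by
      have h1 : Tendsto (fun n : ℕ => 1 - Real.log (f n) * (2 * Real.log n)⁻¹) atTop
          (nhds 1) := by
        have := (tendsto_const_nhds (x := (1:ℝ)) (f := atTop (α := ℕ))).sub hratio
        simpa using this
      have := h1.inv₀ (by norm_num)
      simpa using this
    apply hmain.congr'
    have hfev : ∀ᶠ n : ℕ in atTop, 0 < f n :=
      hflim.eventually (eventually_gt_nhds hcpos)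
    have hlogev : ∀ᶠ n : ℕ in atTop, 1 < Real.log n := by
      have : Tendsto (fun n : ℕ => Real.log n) atTop atTop :=
        tendsto_log_atTop.comp tendsto_natCast_atTop_atTop
      exact this.eventually_gt_atTop 1
    filter_upwards [hfev, hlogev, eventually_ge_atTop 1] with n hfn hlog hn1
    have hn0 : (0:ℝ) < (n:ℝ) := by exact_mod_cast hn1
    have hVd : V n - (a - 1) ^ 2 = f n / (n:ℝ) ^ 2 := by
      simp only [hf]; field_simp
    rw [hVd, Real.log_div (ne_of_gt hfn) (by positivity)]
    have hlogn2 : Real.log ((n:ℝ) ^ 2) = 2 * Real.log n := by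
      rw [Real.log_pow]; push_cast; ring
    rw [hlogn2]
    have hden : (0:ℝ) < 2 * Real.log n := by linarith
    rw [neg_sub]
    field_simp
end

section
/- Let V_n = (36n² + 49n − 144)/(12n³) for n ≥ 2 (the nth constrained quantization error for the uniform distribution on {(x,0) : 0 ≤ x ≤ 2} with constraint the segment of y = √3·x between (0,0) and (2, 2√3)). Then V_n converges to V_∞ = 0 as n → ∞, the constrained quantization dimension lim_{n→∞} 2·log n / (−log(V_n − V_∞)) equals 2, and the 2-dimensional constrained quantization coefficient lim_{n→∞} n·(V_n − V_∞) equals 3. -/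
open Filter Real

/-- For `Vₙ = (36n² + 49n - 144)/(12n³)` (the `n`th constrained quantization error for the
uniform distribution on `{(x,0) : 0 ≤ x ≤ 2}` with constraint the segment of `y = √3 x` between
`(0,0)` and `(2, 2√3)`): `Vₙ → V_∞ = 0`, the constrained quantization dimension
`lim 2 log n / (-log(Vₙ - V_∞))` equals `2`, and the `2`-dimensional constrained quantization
coefficient `lim n (Vₙ - V_∞)` equals `3`. -/
theorem constrained_dimension_coefficient_segment_sqrt_three :
    ∀ V : ℕ → ℝ,
      (V = fun n : ℕ => (36 * (n : ℝ) ^ 2 + 49 * (n : ℝ) - 144) / (12 * (n : ℝ) ^ 3)) →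
      Tendsto V atTop (nhds 0) ∧
      Tendsto (fun n : ℕ => 2 * Real.log n / (-Real.log (V n - 0))) atTop (nhds 2) ∧
      Tendsto (fun n : ℕ => (n : ℝ) * (V n - 0)) atTop (nhds 3) := by
  intro V hV
  have h1 : Tendsto (fun n : ℕ => ((n : ℝ))⁻¹) atTop (nhds 0) :=
    tendsto_inv_atTop_zero.comp tendsto_natCast_atTop_atTop
  -- the coefficient limit
  have hW : Tendsto (fun n : ℕ => (n : ℝ) * V n) atTop (nhds 3) := by
    have hlim : Tendsto (fun n : ℕ =>
        (36 + 49 * ((n : ℝ))⁻¹ - 144 * (((n : ℝ))⁻¹ * ((n : ℝ))⁻¹)) / 12) atTop (nhds 3) := by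
      have := (((tendsto_const_nhds : Tendsto (fun _ : ℕ => (36:ℝ)) atTop (nhds 36)).add
        (h1.const_mul 49)).sub ((h1.mul h1).const_mul 144)).div_const (12 : ℝ)
      norm_num at this
      exact this
    refine hlim.congr' ?_
    filter_upwards [eventually_ge_atTop 1] with n hn
    have hn' : (n : ℝ) ≠ 0 := by positivity
    rw [hV]
    field_simp
  have hWpos : ∀ᶠ n : ℕ in atTop, 0 < V n := by
    filter_upwards [eventually_ge_atTop 2] with n hn
    have hn' : (2 : ℝ) ≤ (n : ℝ) := by exact_mod_cast hn
    rw [hV]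
    have hnum : 0 < 36 * (n : ℝ) ^ 2 + 49 * (n : ℝ) - 144 := by nlinarith
    have hden : 0 < 12 * (n : ℝ) ^ 3 := by positivity
    positivity
  have hV0 : Tendsto V atTop (nhds 0) := by
    have := hW.mul h1
    norm_num at this
    refine this.congr' ?_
    filter_upwards [eventually_ge_atTop 1] with n hn
    have hn' : (n : ℝ) ≠ 0 := by positivity
    field_simp
  refine ⟨hV0, ?_, by simpa using hW⟩
  -- the dimension limit
  have hlogW : Tendsto (fun n : ℕ => Real.log ((n : ℝ) * V n)) atTop (nhds (Real.log 3)) :=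
    (Real.continuousAt_log (by norm_num)).tendsto.comp hW
  have hlogn : Tendsto (fun n : ℕ => Real.log n) atTop atTop :=
    Real.tendsto_log_atTop.comp tendsto_natCast_atTop_atTop
  have hratio : Tendsto (fun n : ℕ => Real.log ((n : ℝ) * V n) / Real.log n) atTop (nhds 0) :=
    hlogW.div_atTop hlogn
  have hmain : Tendsto (fun n : ℕ =>
      2 / (1 - Real.log ((n : ℝ) * V n) / Real.log n)) atTop (nhds 2) := by
    have := (tendsto_const_nhds : Tendsto (fun _ : ℕ => (2:ℝ)) atTop (nhds 2)).div
      ((tendsto_const_nhds : Tendsto (fun _ : ℕ => (1:ℝ)) atTop (nhds 1)).sub hratio)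
      (by norm_num : (1:ℝ) - 0 ≠ 0)
    norm_num at this
    exact this
  refine hmain.congr' ?_
  filter_upwards [hWpos, eventually_ge_atTop 2] with n hpos hn
  have hn0 : (0 : ℝ) < n := by positivity
  have hL : Real.log n ≠ 0 := by
    have h2 : (2 : ℝ) ≤ (n : ℝ) := by exact_mod_cast hn
    have h3 : (0 : ℝ) < Real.log n := Real.log_pos (by linarith)
    linarith
  have hVW : V n = ((n : ℝ) * V n) / n := by field_simp
  have hWn : (0 : ℝ) < (n : ℝ) * V n := by positivity
  rw [sub_zero, hVW, Real.log_div (ne_of_gt hWn) (ne_of_gt hn0)]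
  rw [neg_sub]
  field_simp
end

section
/- Let V_n = 7(5788(n−1)n + 3015)/(10125(1−2n)²) for n ≥ 8 (the nth constrained quantization error for the uniform distribution on {(x,0) : 0 ≤ x ≤ 2} with constraint the segment of y = 1 between (0,1) and (28/15,1)). Then V_n converges to V_∞ = 10129/10125 as n → ∞, the constrained quantization dimension lim_{n→∞} 2·log n / (−log(V_n − V_∞)) equals 1, and the 1-dimensional constrained quantization coefficient lim_{n→∞} n²·(V_n − V_∞) equals 2744/10125. -/
open Filter Real

/-- For `Vₙ = 7(5788(n-1)n + 3015)/(10125(1-2n)²)` (the `n`th constrained quantization error for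
the uniform distribution on `{(x,0) : 0 ≤ x ≤ 2}` with constraint the segment of `y = 1` between
`(0,1)` and `(28/15, 1)`): `Vₙ → V_∞ = 10129/10125`, the constrained quantization dimension
`lim 2 log n / (-log(Vₙ - V_∞))` equals `1`, and the `1`-dimensional constrained quantization
coefficient `lim n² (Vₙ - V_∞)` equals `2744/10125`. -/
theorem constrained_dimension_coefficient_segment_offset :
    ∀ V : ℕ → ℝ,
      (V = fun n : ℕ => 7 * (5788 * ((n : ℝ) - 1) * (n : ℝ) + 3015) /
        (10125 * (1 - 2 * (n : ℝ)) ^ 2)) →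
      Tendsto V atTop (nhds (10129 / 10125)) ∧
      Tendsto (fun n : ℕ => 2 * Real.log n / (-Real.log (V n - 10129 / 10125)))
        atTop (nhds 1) ∧
      Tendsto (fun n : ℕ => (n : ℝ) ^ 2 * (V n - 10129 / 10125)) atTop
        (nhds (2744 / 10125)) := by
  intro V hV
  have hden : ∀ n : ℕ, (1 - 2 * (n : ℝ)) ≠ 0 := by
    intro n h
    rcases Nat.eq_zero_or_pos n with h0 | h1
    · simp [h0] at h
    · have : (1 : ℝ) ≤ (n : ℝ) := by exact_mod_cast h1
      nlinarith
  have hkey : ∀ n : ℕ, V n - 10129 / 10125 = 10976 / (10125 * (1 - 2 * (n : ℝ)) ^ 2) := by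
    intro n
    have h := hden n
    rw [hV]
    have h2 : (10125 * (1 - 2 * (n : ℝ)) ^ 2) ≠ 0 := by positivity
    show 7 * (5788 * ((n : ℝ) - 1) * (n : ℝ) + 3015) / (10125 * (1 - 2 * (n : ℝ)) ^ 2) - 10129 / 10125 = _
    rw [div_sub_div _ _ h2 (by norm_num : (10125:ℝ) ≠ 0),
      div_eq_div_iff (mul_ne_zero h2 (by norm_num)) h2]
    ring
  -- u n = 1/n - 2 tends to -2
  have hu : Tendsto (fun n : ℕ => 1 / (n : ℝ) - 2) atTop (nhds (-2)) := by
    have := tendsto_one_div_atTop_nhds_zero_nat (𝕜 := ℝ)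
    have := this.sub_const 2
    simpa using this
  -- third limit
  have h3 : Tendsto (fun n : ℕ => (n : ℝ) ^ 2 * (V n - 10129 / 10125)) atTop
      (nhds (2744 / 10125)) := by
    have hcont : ContinuousAt (fun x : ℝ => 10976 / (10125 * x ^ 2)) (-2) := by
      apply ContinuousAt.div continuousAt_const (by fun_prop)
      norm_num
    have hc := hcont.tendsto.comp hu
    have heq : ∀ᶠ n : ℕ in atTop,
        ((fun x : ℝ => 10976 / (10125 * x ^ 2)) ∘ fun n : ℕ => 1 / (n : ℝ) - 2) n
          = (n : ℝ) ^ 2 * (V n - 10129 / 10125) := by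
      filter_upwards [eventually_ge_atTop 1] with n hn
      have hn0 : (n : ℝ) ≠ 0 := by positivity
      have h := hden n
      have hx : (1 / (n : ℝ) - 2) ^ 2 = (1 - 2 * (n : ℝ)) ^ 2 / (n : ℝ) ^ 2 := by
        field_simp
      simp only [Function.comp, hkey n, hx]
      field_simp
    have hc2 := hc.congr' heq
    have : (10976 : ℝ) / (10125 * (-2 : ℝ) ^ 2) = 2744 / 10125 := by norm_num
    rwa [this] at hc2
  refine ⟨?_, ?_, h3⟩
  · -- first limit
    have hsq : Tendsto (fun n : ℕ => 1 / (n : ℝ) ^ 2) atTop (nhds 0) := by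
      have := (tendsto_one_div_atTop_nhds_zero_nat (𝕜 := ℝ)).mul (tendsto_one_div_atTop_nhds_zero_nat (𝕜 := ℝ))
      simpa [div_mul_div_comm, sq] using this
    have hmain : Tendsto (fun n : ℕ =>
        10129 / 10125 + 1 / (n : ℝ) ^ 2 * ((n : ℝ) ^ 2 * (V n - 10129 / 10125)))
        atTop (nhds (10129 / 10125 + 0 * (2744 / 10125))) :=
      tendsto_const_nhds.add (hsq.mul h3)
    have heq : ∀ᶠ n : ℕ in atTop,
        10129 / 10125 + 1 / (n : ℝ) ^ 2 * ((n : ℝ) ^ 2 * (V n - 10129 / 10125)) = V n := by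
      filter_upwards [eventually_ge_atTop 1] with n hn
      have hn0 : (n : ℝ) ≠ 0 := by positivity
      field_simp
      ring
    have := hmain.congr' heq
    simpa using this
  · -- second limit
    set e : ℕ → ℝ := fun n =>
      Real.log (10125 * (1 - 2 * (n : ℝ)) ^ 2 / (10976 * (n : ℝ) ^ 2)) with he
    have hecont : ContinuousAt (fun x : ℝ => Real.log (10125 / 10976 * x ^ 2)) (-2) := by
      apply Real.continuousAt_log ?_ |>.comp (by fun_prop)
      norm_num
    have hee : Tendsto e atTop (nhds (Real.log (10125 / 10976 * (-2 : ℝ) ^ 2))) := by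
      have hc := hecont.tendsto.comp hu
      apply hc.congr'
      filter_upwards [eventually_ge_atTop 1] with n hn
      have hn0 : (n : ℝ) ≠ 0 := by positivity
      simp only [Function.comp, he]
      congr 1
      field_simp
    have hlogn : Tendsto (fun n : ℕ => 2 * Real.log n) atTop atTop := by
      apply Tendsto.const_mul_atTop (by norm_num)
      exact Real.tendsto_log_atTop.comp tendsto_natCast_atTop_atTop
    have hquot : Tendsto (fun n : ℕ => e n / (2 * Real.log n)) atTop (nhds 0) :=
      hee.div_atTop hlogn
    have hfin : Tendsto (fun n : ℕ => 1 / (1 + e n / (2 * Real.log n))) atTop (nhds 1) := by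
      have h1 : Tendsto (fun _ : ℕ => (1 : ℝ)) atTop (nhds 1) := tendsto_const_nhds
      have := h1.div (h1.add hquot) (by norm_num : (1:ℝ) + 0 ≠ 0)
      simpa [Pi.div_def, one_div] using this
    apply hfin.congr'
    filter_upwards [eventually_ge_atTop 2] with n hn
    have hn1 : (1 : ℝ) < (n : ℝ) := by exact_mod_cast hn
    have hn0 : (n : ℝ) ≠ 0 := by positivity
    have hlp : 0 < Real.log n := Real.log_pos hn1
    have ha : (2 * Real.log n) ≠ 0 := by positivity
    have hg0 : 10125 * (1 - 2 * (n : ℝ)) ^ 2 / (10976 * (n : ℝ) ^ 2) ≠ 0 := by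
      have := hden n
      positivity
    have hD : -Real.log (V n - 10129 / 10125) = 2 * Real.log n + e n := by
      rw [hkey n, ← Real.log_inv, he]
      have h2 : 2 * Real.log (n : ℝ) = Real.log ((n : ℝ) ^ 2) := by
        rw [Real.log_pow]; push_cast; ring
      rw [h2, ← Real.log_mul (by positivity) hg0]
      congr 1
      have h := hden n
      field_simp
    rw [show (1 : ℝ) + e n / (2 * Real.log n)
        = (2 * Real.log n + e n) / (2 * Real.log n) by field_simp, one_div_div, hD]
end
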